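/- For the quasi-conformal coframe, the scalar B-object satisfies B = η^{ab}⁽¹⁾B_{ab} = η^{ab}⁽²⁾B_{ab} = e^{−2f}Δ̃φ at every point, where Δ̃φ = φ₁₁+φ₂₂+φ₃₃. -/

import Mathlib

set_option linter.unreachableTactic false
set_option linter.unusedTactic false


open scoped BigOperators

noncomputable section

/-- Partial derivative along coordinate `i` on `ℝ³`. -/
def pd (i : Fin 3) (f : (Fin 3 → ℝ) → ℝ) : (Fin 3 → ℝ) → ℝ :=
  fun x => fderiv ℝ f x (Pi.single i 1)

/-- Partial derivative indexed by a 4-index: zero for the time index `0`. -/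
def pd4 (f : (Fin 3 → ℝ) → ℝ) (p : Fin 4) : (Fin 3 → ℝ) → ℝ :=
  if h : p = 0 then 0 else pd (p.pred h) f

/-- Signs of the Minkowski metric `η = diag(1,−1,−1,−1)`. -/
def epsM (a : Fin 4) : ℝ := if a = 0 then 1 else -1

/-- The Minkowski metric `η = diag(1,−1,−1,−1)`. -/
def etaM (a b : Fin 4) : ℝ := if a = b then epsM a else 0

/-- Anholonomity objects `C^a_{mn}` of the quasi-conformal coframe
`ϑ⁰ = e^{−f}dt`, `ϑⁱ = e^{f}dxⁱ`:  `C⁰_{0i} = e^{−f}fᵢ`, `C^i_{ij} = −e^{−f}fⱼ`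
(spatial `i ≠ j`), antisymmetric in the lower pair, all other components zero. -/
def Cob (f : (Fin 3 → ℝ) → ℝ) (a m n : Fin 4) : (Fin 3 → ℝ) → ℝ := fun x =>
  if a = 0 then
    Real.exp (-f x) * ((if m = 0 then pd4 f n x else 0) - (if n = 0 then pd4 f m x else 0))
  else
    Real.exp (-f x) * ((if n = a then pd4 f m x else 0) - (if m = a then pd4 f n x else 0))

/-- The contraction `C_a := C^m_{am}`. -/
def Cone (f : (Fin 3 → ℝ) → ℝ) (a : Fin 4) : (Fin 3 → ℝ) → ℝ :=
  fun x => ∑ m : Fin 4, Cob f m a m x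

/-- The B-objects `B^a_{mn0} := 0`, `B^a_{mnp} := e^{−f} ∂_p C^a_{mn}` for `p = 1,2,3`. -/
def Bob (f : (Fin 3 → ℝ) → ℝ) (a m n p : Fin 4) : (Fin 3 → ℝ) → ℝ :=
  fun x => Real.exp (-f x) * pd4 (Cob f a m n) p x

/-- `⁽¹⁾B_{ab} := B_{abm}{}^m` (indices moved with `η`). -/
def B1 (f : (Fin 3 → ℝ) → ℝ) (a b : Fin 4) : (Fin 3 → ℝ) → ℝ :=
  fun x => epsM a * ∑ m : Fin 4, epsM m * Bob f a b m m x

/-- `⁽²⁾B_{ab} := B^m{}_{mab}`. -/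
def B2 (f : (Fin 3 → ℝ) → ℝ) (a b : Fin 4) : (Fin 3 → ℝ) → ℝ :=
  fun x => ∑ m : Fin 4, Bob f m m a b x

/-- `⁽³⁾B_{ab} := B^m{}_{abm}`. -/
def B3 (f : (Fin 3 → ℝ) → ℝ) (a b : Fin 4) : (Fin 3 → ℝ) → ℝ :=
  fun x => ∑ m : Fin 4, Bob f m a b m x

/-- The scalar B-object `B := η^{ab}⁽¹⁾B_{ab}`. -/
def Bscalar (f : (Fin 3 → ℝ) → ℝ) : (Fin 3 → ℝ) → ℝ :=
  fun x => ∑ a : Fin 4, epsM a * B1 f a a x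

/-- `⁽¹⁾A_{ab} := C_{abm}C^m`. -/
def A1 (f : (Fin 3 → ℝ) → ℝ) (a b : Fin 4) : (Fin 3 → ℝ) → ℝ :=
  fun x => epsM a * ∑ m : Fin 4, epsM m * Cob f a b m x * Cone f m x

/-- `⁽²⁾A_{ab} := C_{mab}C^m`. -/
def A2 (f : (Fin 3 → ℝ) → ℝ) (a b : Fin 4) : (Fin 3 → ℝ) → ℝ :=
  fun x => ∑ m : Fin 4, Cob f m a b x * Cone f m x

/-- `⁽³⁾A_{ab} := C_{amn}C_b{}^{mn}`. -/
def A3 (f : (Fin 3 → ℝ) → ℝ) (a b : Fin 4) : (Fin 3 → ℝ) → ℝ :=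
  fun x => epsM a * epsM b *
    ∑ m : Fin 4, ∑ n : Fin 4, epsM m * epsM n * Cob f a m n x * Cob f b m n x

/-- `⁽⁴⁾A_{ab} := C_{amn}C^m{}_b{}^n`. -/
def A4 (f : (Fin 3 → ℝ) → ℝ) (a b : Fin 4) : (Fin 3 → ℝ) → ℝ :=
  fun x => epsM a * ∑ m : Fin 4, ∑ n : Fin 4, epsM n * Cob f a m n x * Cob f m b n x

/-- `⁽⁵⁾A_{ab} := C_{man}C^n{}_b{}^m`. -/
def A5 (f : (Fin 3 → ℝ) → ℝ) (a b : Fin 4) : (Fin 3 → ℝ) → ℝ :=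
  fun x => ∑ m : Fin 4, ∑ n : Fin 4, Cob f m a n x * Cob f n b m x

/-- `⁽⁶⁾A_{ab} := C_{man}C^m{}_b{}^n`. -/
def A6 (f : (Fin 3 → ℝ) → ℝ) (a b : Fin 4) : (Fin 3 → ℝ) → ℝ :=
  fun x => ∑ m : Fin 4, ∑ n : Fin 4, epsM m * epsM n * Cob f m a n x * Cob f m b n x

/-- `⁽⁷⁾A_{ab} := C_a C_b`. -/
def A7 (f : (Fin 3 → ℝ) → ℝ) (a b : Fin 4) : (Fin 3 → ℝ) → ℝ :=
  fun x => Cone f a x * Cone f b x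

/-- `⁽¹⁾A := η^{ab}⁽¹⁾A_{ab}`. -/
def A1s (f : (Fin 3 → ℝ) → ℝ) : (Fin 3 → ℝ) → ℝ :=
  fun x => ∑ a : Fin 4, epsM a * A1 f a a x

/-- `⁽²⁾A := η^{ab}⁽³⁾A_{ab}`. -/
def A2s (f : (Fin 3 → ℝ) → ℝ) : (Fin 3 → ℝ) → ℝ :=
  fun x => ∑ a : Fin 4, epsM a * A3 f a a x

/-- `⁽³⁾A := η^{ab}⁽⁴⁾A_{ab}`. -/
def A3s (f : (Fin 3 → ℝ) → ℝ) : (Fin 3 → ℝ) → ℝ :=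
  fun x => ∑ a : Fin 4, epsM a * A4 f a a x

/-- `φ_{ij} := f_{ij} − fᵢfⱼ`. -/
def phiM (f : (Fin 3 → ℝ) → ℝ) (i j : Fin 3) : (Fin 3 → ℝ) → ℝ :=
  fun x => pd i (pd j f) x - pd i f x * pd j f x

/-- `Δ̃φ := φ₁₁ + φ₂₂ + φ₃₃`. -/
def tphi (f : (Fin 3 → ℝ) → ℝ) : (Fin 3 → ℝ) → ℝ :=
  fun x => ∑ i : Fin 3, phiM f i i x

/-- The Laplacian `Δf := f₁₁ + f₂₂ + f₃₃`. -/
def lap (f : (Fin 3 → ℝ) → ℝ) : (Fin 3 → ℝ) → ℝ :=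
  fun x => ∑ i : Fin 3, pd i (pd i f) x

/-- `∇²f := f₁² + f₂² + f₃²`. -/
def grad2 (f : (Fin 3 → ℝ) → ℝ) : (Fin 3 → ℝ) → ℝ :=
  fun x => ∑ i : Fin 3, pd i f x ^ 2

/-- The leading (second order) part
`L_{ab} = β₁⁽¹⁾B_{(ab)} + β₂⁽²⁾B_{(ab)} + β₃⁽³⁾B_{ab} + β₄η_{ab}B + β₅⁽¹⁾B_{[ab]} + β₆⁽²⁾B_{[ab]}`. -/
def Lmat (β₁ β₂ β₃ β₄ β₅ β₆ : ℝ) (f : (Fin 3 → ℝ) → ℝ) (a b : Fin 4) :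
    (Fin 3 → ℝ) → ℝ := fun x =>
  β₁ * ((B1 f a b x + B1 f b a x) / 2) + β₂ * ((B2 f a b x + B2 f b a x) / 2) +
  β₃ * B3 f a b x + β₄ * etaM a b * Bscalar f x +
  β₅ * ((B1 f a b x - B1 f b a x) / 2) + β₆ * ((B2 f a b x - B2 f b a x) / 2)

/-- The quadratic part `Q_{ab}`. -/
def Qmat (α₁ α₂ α₃ α₄ α₅ α₆ α₇ α₈ α₉ α₁₀ α₁₁ α₁₂ : ℝ) (f : (Fin 3 → ℝ) → ℝ)
    (a b : Fin 4) : (Fin 3 → ℝ) → ℝ := fun x =>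
  α₁ * ((A1 f a b x + A1 f b a x) / 2) + α₂ * A2 f a b x + α₃ * A3 f a b x +
  α₄ * ((A4 f a b x + A4 f b a x) / 2) + α₅ * A5 f a b x + α₆ * A6 f a b x +
  α₇ * A7 f a b x + α₈ * ((A1 f a b x - A1 f b a x) / 2) +
  α₉ * ((A4 f a b x - A4 f b a x) / 2) +
  etaM a b * (α₁₀ * A1s f x + α₁₁ * A2s f x + α₁₂ * A3s f x)

/-- `diag(β₁−β₄, β₁+β₄, β₁+β₄, β₁+β₄)`. -/
def diagM (β₁ β₄ : ℝ) (a b : Fin 4) : ℝ :=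
  if a = b then (if a = 0 then β₁ - β₄ else β₁ + β₄) else 0


lemma contDiff_pd (f : (Fin 3 → ℝ) → ℝ) (hf : ContDiff ℝ (⊤:ℕ∞) f) (i : Fin 3) :
    ContDiff ℝ (⊤:ℕ∞) (pd i f) :=
  (hf.fderiv_right (by exact_mod_cast le_top)).clm_apply contDiff_const

lemma pd_exp_mul (f : (Fin 3 → ℝ) → ℝ) (hf : ContDiff ℝ (⊤:ℕ∞) f) (i j : Fin 3) (x : Fin 3 → ℝ) :
    pd i (fun y => Real.exp (-f y) * pd j f y) x
      = Real.exp (-f x) * (pd i (pd j f) x - pd i f x * pd j f x) := by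
  have hfd : HasFDerivAt f (fderiv ℝ f x) x := (hf.differentiable (by simp) x).hasFDerivAt
  have hg : HasFDerivAt (pd j f) (fderiv ℝ (pd j f) x) x :=
    ((contDiff_pd f hf j).differentiable (by simp) x).hasFDerivAt
  have he : HasFDerivAt (fun y => Real.exp (-f y)) (Real.exp (-f x) • (-fderiv ℝ f x)) x :=
    hfd.neg.exp
  have h := he.mul hg
  have h2 : pd i (fun y => Real.exp (-f y) * pd j f y) x
      = (Real.exp (-f x) • fderiv ℝ (pd j f) x + pd j f x • (Real.exp (-f x) • (-fderiv ℝ f x))) (Pi.single i 1) := by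
    rw [pd, show (fun y => Real.exp (-f y) * pd j f y) = (fun y => Real.exp (-f y)) * pd j f from rfl, h.fderiv]
  rw [h2]
  simp [pd]
  ring

lemma pd_neg (i : Fin 3) (g : (Fin 3 → ℝ) → ℝ) (x : Fin 3 → ℝ) :
    pd i (fun y => -(g y)) x = -(pd i g x) := by
  simp [pd, fderiv_neg]

lemma pd_neg_exp_mul (f : (Fin 3 → ℝ) → ℝ) (hf : ContDiff ℝ (⊤:ℕ∞) f) (i j : Fin 3) (x : Fin 3 → ℝ) :
    pd i (fun y => -(Real.exp (-f y) * pd j f y)) x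
      = -(Real.exp (-f x) * (pd i (pd j f) x - pd i f x * pd j f x)) := by
  rw [pd_neg, pd_exp_mul f hf]

lemma pd_zero (i : Fin 3) (x : Fin 3 → ℝ) :
    pd i (fun _ : Fin 3 → ℝ => (0:ℝ)) x = 0 := by
  simp [pd]

/-- for the quasi-conformal coframe, the scalar B-object satisfies
`B = η^{ab}⁽¹⁾B_{ab} = η^{ab}⁽²⁾B_{ab} = e^{−2f}Δ̃φ` at every point. -/
theorem scalar_B_object (f : (Fin 3 → ℝ) → ℝ) (hf : ContDiff ℝ (⊤ : ℕ∞) f)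
    (x : Fin 3 → ℝ) :
    Bscalar f x = Real.exp (-2 * f x) * tphi f x ∧
      (∑ a : Fin 4, epsM a * B2 f a a x) = Real.exp (-2 * f x) * tphi f x := by
  have h001 : Cob f 0 0 1 = fun y => Real.exp (-f y) * pd 0 f y := by
    funext y; simp [Cob, pd4]; try rfl
  have h002 : Cob f 0 0 2 = fun y => Real.exp (-f y) * pd 1 f y := by
    funext y; simp [Cob, pd4]; try rfl
  have h003 : Cob f 0 0 3 = fun y => Real.exp (-f y) * pd 2 f y := by
    funext y; simp [Cob, pd4]; try rfl
  have h111 : Cob f 1 1 1 = fun _ => (0:ℝ) := by funext y; simp [Cob, pd4]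
  have h222 : Cob f 2 2 2 = fun _ => (0:ℝ) := by funext y; simp [Cob, pd4]
  have h333 : Cob f 3 3 3 = fun _ => (0:ℝ) := by funext y; simp [Cob, pd4]
  have h112 : Cob f 1 1 2 = fun y => -(Real.exp (-f y) * pd 1 f y) := by
    funext y; simp [Cob, pd4]; try ring_nf; try rfl
  have h113 : Cob f 1 1 3 = fun y => -(Real.exp (-f y) * pd 2 f y) := by
    funext y; simp [Cob, pd4]; try ring_nf; try rfl
  have h221 : Cob f 2 2 1 = fun y => -(Real.exp (-f y) * pd 0 f y) := by
    funext y; simp [Cob, pd4]; try ring_nf; try rfl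
  have h223 : Cob f 2 2 3 = fun y => -(Real.exp (-f y) * pd 2 f y) := by
    funext y; simp [Cob, pd4]; try ring_nf; try rfl
  have h331 : Cob f 3 3 1 = fun y => -(Real.exp (-f y) * pd 0 f y) := by
    funext y; simp [Cob, pd4]; try ring_nf; try rfl
  have h332 : Cob f 3 3 2 = fun y => -(Real.exp (-f y) * pd 1 f y) := by
    funext y; simp [Cob, pd4]; try ring_nf; try rfl
  have hp2 : ∀ h : (2:Fin 4) ≠ 0, Fin.pred 2 h = 1 := fun _ => rfl
  have hp3 : ∀ h : (3:Fin 4) ≠ 0, Fin.pred 3 h = 2 := fun _ => rfl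
  have hexp : Real.exp (-(2 * f x)) = Real.exp (-f x) * Real.exp (-f x) := by
    rw [← Real.exp_add]; ring_nf
  constructor
  · simp only [Bscalar, B1, B2, Bob, Fin.sum_univ_four, epsM, pd4,
      h001, h002, h003, h111, h222, h333, h112, h113, h221, h223, h331, h332]
    simp [pd_exp_mul f hf, pd_neg_exp_mul f hf, pd_zero, tphi, phiM,
      Fin.sum_univ_three, hp2, hp3]
    rw [hexp]; ring
  · simp only [B2, Bob, Fin.sum_univ_four, epsM, pd4,
      h001, h002, h003, h111, h222, h333, h112, h113, h221, h223, h331, h332]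
    simp [pd_exp_mul f hf, pd_neg_exp_mul f hf, pd_zero, tphi, phiM,
      Fin.sum_univ_three, hp2, hp3]
    rw [hexp]; ring
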